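/- Let κ be regular uncountable with κ^{<κ} = κ and |A| ≤ κ. Then Q^κ_{A,ρ} has canonical lower bounds: there is a decomposition Q^κ_{A,ρ} = ⋃_{γ<κ} C_γ into directed pieces and a function f : κ^{<κ} → κ such that whenever λ < κ and (p_α : α < λ) is a decreasing sequence of conditions with p_α ∈ C_{γ_α}, there is a lower bound p of the sequence with p ∈ C_{f(⟨γ_α : α<λ⟩)}. -/

import Mathlib

open Cardinal

universe u

variable {A B α : Type u}

/-- A letter of a word over the alphabet `A ∪ B`, with a sign
(`true` for the letter itself, `false` for its inverse). -/
abbrev CofLetter (A B : Type u) : Type u := (A ⊕ B) × Bool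

/-- The binary relation on `α` determined by a single letter: generators from `A`
are interpreted by the sections of `s ⊆ A × α × α`, generators from `B` by `ρ`. -/
def letterRel (s : Set (A × α × α)) (ρ : B → Equiv.Perm α) : CofLetter A B → Set (α × α)
  | (Sum.inl a, true) => {p | (a, p.1, p.2) ∈ s}
  | (Sum.inl a, false) => {p | (a, p.2, p.1) ∈ s}
  | (Sum.inr b, true) => {p | ρ b p.1 = p.2}
  | (Sum.inr b, false) => {p | ρ b p.2 = p.1}

/-- Evaluation `e_w[s, ρ]` of a word `w` (a list of letters, the head of the list
being the outermost letter) as a binary relation on `α`. -/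
def evalWord (s : Set (A × α × α)) (ρ : B → Equiv.Perm α) :
    List (CofLetter A B) → Set (α × α)
  | [] => {p | p.1 = p.2}
  | l :: w => {p | ∃ y, (p.1, y) ∈ evalWord s ρ w ∧ (y, p.2) ∈ letterRel s ρ l}

/-- A word is reduced if no letter is immediately followed by its inverse. -/
def ReducedWord (w : List (CofLetter A B)) : Prop :=
  w.Chain' fun l m => ¬(l.1 = m.1 ∧ l.2 = !m.2)

/-- A good word: a nonempty reduced word which is either a power of a single letter
or starts and ends with different letters. -/
def GoodWord (w : List (CofLetter A B)) : Prop :=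
  w ≠ [] ∧ ReducedWord w ∧
    ((∃ l, ∀ m ∈ w, m = l) ∨
      (∃ h t, w.head? = some h ∧ w.getLast? = some t ∧ h.1 ≠ t.1))

/-- `ρ : B → S(α)` induces a `κ`-cofinitary representation: every non-identity
element of the image of its canonical extension to the free group on `B` has
fewer than `κ = #α` fixed points. -/
def InducesCofinitaryRep (ρ : B → Equiv.Perm α) : Prop :=
  ∀ g ∈ (FreeGroup.lift ρ).range, g ≠ 1 → #{x : α | g x = x} < #α

/-- A condition of the forcing `Q^κ_{A,ρ}` for adding a `κ`-maximal cofinitary group. -/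
structure QCond (A B α : Type u) (ρ : B → Equiv.Perm α) where
  /-- the finite-approximation part `s` -/
  s : Set (A × α × α)
  /-- the side condition: a small set of good words -/
  F : Set (List (CofLetter A B))
  s_small : #s < #α
  F_small : #F < #α
  inj : ∀ a : A, ∀ x y x' y' : α, (a, x, y) ∈ s → (a, x', y') ∈ s → (x = x' ↔ y = y')
  good : ∀ w ∈ F, GoodWord w

/-- The extension relation of `Q^κ_{A,ρ}`: `p ≤ q` iff `p` end-extends `q` and no
word of `q.F` gains new fixed points. -/
def QLE (ρ : B → Equiv.Perm α) (p q : QCond A B α ρ) : Prop :=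
  q.s ⊆ p.s ∧ q.F ⊆ p.F ∧
    ∀ w ∈ q.F, ∀ x : α, (x, x) ∈ evalWord p.s ρ w → (x, x) ∈ evalWord q.s ρ w


private lemma letterRel_mono' {s t : Set (A × α × α)} (hst : s ⊆ t)
    (ρ : B → Equiv.Perm α) (l : CofLetter A B) : letterRel s ρ l ⊆ letterRel t ρ l := by
  rcases l with ⟨a | b, b'⟩ <;> cases b' <;> intro p hp
  · exact hst hp
  · exact hst hp
  · exact hp
  · exact hp

private lemma evalWord_mono' {s t : Set (A × α × α)} (hst : s ⊆ t)
    (ρ : B → Equiv.Perm α) (w : List (CofLetter A B)) :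
    evalWord s ρ w ⊆ evalWord t ρ w := by
  induction w with
  | nil => exact fun p hp => hp
  | cons l w ih =>
    rintro p ⟨y, hy, hl⟩
    exact ⟨y, ih hy, letterRel_mono' hst ρ l hl⟩

private lemma letterRel_iUnion' {ι : Type u} [Nonempty ι] {S : ι → Set (A × α × α)}
    (ρ : B → Equiv.Perm α) (l : CofLetter A B) {p : α × α}
    (hp : p ∈ letterRel (⋃ i, S i) ρ l) : ∃ i, p ∈ letterRel (S i) ρ l := by
  rcases l with ⟨a | b, b'⟩
  · cases b'
    · have h : (a, p.2, p.1) ∈ ⋃ i, S i := hp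
      obtain ⟨j, hj⟩ := Set.mem_iUnion.1 h
      exact ⟨j, hj⟩
    · have h : (a, p.1, p.2) ∈ ⋃ i, S i := hp
      obtain ⟨j, hj⟩ := Set.mem_iUnion.1 h
      exact ⟨j, hj⟩
  · cases b' <;> exact ⟨Classical.arbitrary ι, hp⟩

private lemma evalWord_iUnion' {ι : Type u} [Nonempty ι] {S : ι → Set (A × α × α)}
    (hdir : ∀ i j : ι, S i ⊆ S j ∨ S j ⊆ S i) (ρ : B → Equiv.Perm α)
    (w : List (CofLetter A B)) {p : α × α} (hp : p ∈ evalWord (⋃ i, S i) ρ w) :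
    ∃ i, p ∈ evalWord (S i) ρ w := by
  induction w generalizing p with
  | nil => exact ⟨Classical.arbitrary ι, hp⟩
  | cons l w ih =>
    obtain ⟨y, hy, hl⟩ := hp
    obtain ⟨i, hi⟩ := ih hy
    obtain ⟨j, hj⟩ := letterRel_iUnion' ρ l hl
    rcases hdir i j with h | h
    · exact ⟨j, ⟨y, evalWord_mono' h ρ w hi, hj⟩⟩
    · exact ⟨i, ⟨y, hi, letterRel_mono' h ρ l hj⟩⟩

private lemma mk_small_subsets_le {β : Type u} (hβ : #β ≤ #α)
    (hreg : (#α).IsRegular) (hpow : #α ^< #α = #α) :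
    #{s : Set β // #s < #α} ≤ #α := by
  classical
  haveI : IsWellOrder ((#α).ord.ToType) (· < ·) := isWellOrder_lt
  have hκ : ℵ₀ ≤ #α := hreg.aleph0_le
  obtain ⟨e⟩ := (Cardinal.le_def β α).1 hβ
  have h1 : #{s : Set β // #s < #α} ≤ #{s : Set α // #s < #α} := by
    refine Cardinal.mk_le_of_injective
      (f := fun t => (⟨e '' t.1, by rw [Cardinal.mk_image_eq e.injective]; exact t.2⟩ :
        {s : Set α // #s < #α})) ?_
    intro t t' h
    exact Subtype.ext (Set.image_injective.2 e.injective (congrArg Subtype.val h))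
  refine h1.trans ?_
  have hsub : {s : Set α | #s < #α} ⊆ ⋃ i : (#α).ord.ToType,
      {s : Set α | #s ≤ (Ordinal.typein (α := (#α).ord.ToType) (· < ·) i).card} := by
    intro s hs
    have hs' : #(s : Set α) < #α := hs
    obtain ⟨i, hi⟩ := Ordinal.typein_surj ((· < ·) : (#α).ord.ToType → (#α).ord.ToType → Prop)
      (show (#(s : Set α)).ord <
          Ordinal.type ((· < ·) : (#α).ord.ToType → (#α).ord.ToType → Prop) by
        rw [Ordinal.type_toType]; exact Cardinal.ord_lt_ord.2 hs')
    refine Set.mem_iUnion.2 ⟨i, ?_⟩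
    rw [Set.mem_setOf_eq, hi, Cardinal.card_ord]
  calc #{s : Set α // #s < #α}
      ≤ #(⋃ i : (#α).ord.ToType,
          {s : Set α | #s ≤ (Ordinal.typein (α := (#α).ord.ToType) (· < ·) i).card}) :=
        Cardinal.mk_le_mk_of_subset hsub
    _ ≤ #((#α).ord.ToType) * ⨆ i : (#α).ord.ToType,
          #{s : Set α | #s ≤ (Ordinal.typein (α := (#α).ord.ToType) (· < ·) i).card} :=
        Cardinal.mk_iUnion_le _
    _ ≤ #α * #α := by
        refine mul_le_mul' ?_ (ciSup_le' fun i => ?_)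
        · rw [Cardinal.mk_toType, Cardinal.card_ord]
        · have hb : #({s : Set α | #s ≤ (Ordinal.typein (α := (#α).ord.ToType) (· < ·) i).card} :
              Set (Set α)) ≤
              max #α ℵ₀ ^ (Ordinal.typein (α := (#α).ord.ToType) (· < ·) i).card :=
            Cardinal.mk_bounded_set_le α _
          refine hb.trans ?_
          rw [max_eq_left hκ]
          exact (Cardinal.le_powerlt _ (Cardinal.card_typein_toType_lt (#α) i)).trans hpow.le
    _ = #α := Cardinal.mul_eq_self hκ

/-- If `|A| ≤ κ` then `Q^κ_{A,ρ}` has canonical lower bounds: there is a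
decomposition into `κ` many directed pieces `C γ` covering the poset and a
function `f : κ^{<κ} → κ` such that every decreasing sequence of length `λ < κ`
whose members lie in the pieces `C (γ i)` has a lower bound lying in the piece
indexed by `f` applied to the sequence `γ`. -/
theorem QCond_canonical_lower_bounds
    (hreg : (#α).IsRegular) (hunc : ℵ₀ < #α) (hpow : #α ^< #α = #α)
    (hA : #A ≤ #α)
    (ρ : B → Equiv.Perm α) (hρ : InducesCofinitaryRep ρ) :
    ∃ C : α → Set (QCond A B α ρ),
      (⋃ γ : α, C γ) = Set.univ ∧
      (∀ γ : α, ∀ p ∈ C γ, ∀ q ∈ C γ, ∃ r : QCond A B α ρ, QLE ρ r p ∧ QLE ρ r q) ∧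
      ∃ f : (o : Ordinal.{u}) → (o.ToType → α) → α,
        ∀ o : Ordinal.{u}, o < (#α).ord →
          ∀ γ : o.ToType → α, ∀ p : o.ToType → QCond A B α ρ,
            (∀ i : o.ToType, p i ∈ C (γ i)) →
            (∀ i j : o.ToType, i ≤ j → QLE ρ (p j) (p i)) →
            ∃ q : QCond A B α ρ, (∀ i : o.ToType, QLE ρ q (p i)) ∧ q ∈ C (f o γ) := by
  classical
  have hκ : ℵ₀ ≤ #α := hreg.aleph0_le
  have hβ : #(A × α × α) ≤ #α := by
    rw [Cardinal.mk_prod, Cardinal.mk_prod, Cardinal.lift_id, Cardinal.lift_id,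
      Cardinal.lift_id]
    calc #A * (#α * #α) = #A * #α := by rw [Cardinal.mul_eq_self hκ]
      _ ≤ #α * #α := mul_le_mul' hA le_rfl
      _ = #α := Cardinal.mul_eq_self hκ
  have hX : Nonempty {s : Set (A × α × α) // #s < #α} :=
    ⟨⟨∅, by rw [Cardinal.mk_emptyCollection]; exact hreg.pos⟩⟩
  obtain ⟨ι⟩ := (Cardinal.le_def {s : Set (A × α × α) // #s < #α} α).1
    (mk_small_subsets_le hβ hreg hpow)
  set σ : α → {s : Set (A × α × α) // #s < #α} := Function.invFun ι with hσdef
  have hσι : ∀ x, σ (ι x) = x := Function.leftInverse_invFun ι.injective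
  refine ⟨fun γ => {p | ι ⟨p.s, p.s_small⟩ = γ}, ?_, ?_, ?_⟩
  · exact Set.eq_univ_iff_forall.2 fun p => Set.mem_iUnion.2 ⟨ι ⟨p.s, p.s_small⟩, rfl⟩
  · rintro γ p hp q hq
    have hs : p.s = q.s := by
      have := hp.trans hq.symm
      exact congrArg Subtype.val (ι.injective this)
    refine ⟨⟨p.s, p.F ∪ q.F, p.s_small, ?_, p.inj, ?_⟩, ⟨subset_rfl, Set.subset_union_left,
      fun w hw x hx => hx⟩, ⟨hs.ge, Set.subset_union_right, fun w hw x hx => hs ▸ hx⟩⟩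
    · exact (Cardinal.mk_union_le _ _).trans_lt
        (Cardinal.add_lt_of_lt hκ p.F_small q.F_small)
    · rintro w (hw | hw)
      · exact p.good w hw
      · exact q.good w hw
  · refine ⟨fun o γ =>
      if h : #(⋃ i : o.ToType, ((σ (γ i) : {s : Set (A × α × α) // #s < #α}) :
          Set (A × α × α))) < #α then ι ⟨_, h⟩ else ι (Classical.arbitrary _),
      fun o ho γ p hp hdec => ?_⟩
    have hι2 : #o.ToType < #α := by
      rw [Cardinal.mk_toType]; exact Cardinal.lt_ord.1 ho
    have hdir : ∀ i j : o.ToType, (p i).s ⊆ (p j).s ∨ (p j).s ⊆ (p i).s := fun i j =>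
      (le_total i j).imp (fun h => (hdec i j h).1) (fun h => (hdec j i h).1)
    have hTsmall : #(⋃ i, (p i).s) < #α :=
      (Cardinal.card_iUnion_lt_iff_forall_of_isRegular hreg hι2).2 fun i => (p i).s_small
    have hFsmall : #(⋃ i, (p i).F) < #α :=
      (Cardinal.card_iUnion_lt_iff_forall_of_isRegular hreg hι2).2 fun i => (p i).F_small
    refine ⟨⟨⋃ i, (p i).s, ⋃ i, (p i).F, hTsmall, hFsmall, ?_, ?_⟩, ?_, ?_⟩
    · intro a x y x' y' hxy hxy'
      obtain ⟨si, hi⟩ := Set.mem_iUnion.1 hxy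
      obtain ⟨sj, hj⟩ := Set.mem_iUnion.1 hxy'
      rcases le_total si sj with h | h
      · exact (p sj).inj a x y x' y' ((hdec si sj h).1 hi) hj
      · exact (p si).inj a x y x' y' hi ((hdec sj si h).1 hj)
    · intro w hw
      obtain ⟨i, hi⟩ := Set.mem_iUnion.1 hw
      exact (p i).good w hi
    · intro i
      refine ⟨Set.subset_iUnion (fun i => (p i).s) i,
        Set.subset_iUnion (fun i => (p i).F) i, ?_⟩
      intro w hw x hx
      haveI : Nonempty o.ToType := ⟨i⟩
      obtain ⟨j, hj⟩ := evalWord_iUnion' hdir ρ w hx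
      rcases le_total i j with h | h
      · exact (hdec i j h).2.2 w hw x hj
      · exact evalWord_mono' ((hdec j i h).1) ρ w hj
    · have hσ : ∀ i, σ (γ i) = ⟨(p i).s, (p i).s_small⟩ := by
        intro i
        rw [← hp i]
        exact hσι _
      have hU : (⋃ i : o.ToType, ((σ (γ i) : {s : Set (A × α × α) // #s < #α}) :
          Set (A × α × α))) = ⋃ i, (p i).s :=
        Set.iUnion_congr fun i => congrArg Subtype.val (hσ i)
      have hcond : #(⋃ i : o.ToType, ((σ (γ i) : {s : Set (A × α × α) // #s < #α}) :
          Set (A × α × α))) < #α := by rw [hU]; exact hTsmall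
      show ι ⟨⋃ i, (p i).s, hTsmall⟩ = _
      beta_reduce
      rw [dif_pos hcond]
      exact congrArg ι (Subtype.ext hU.symm)
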